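/- Let r, χ: ℝ² → ℝ be differentiable at (ρ,p) with r(ρ,p) > 0, χ(ρ,p) ≠ 0, ρ + p > 0, and suppose the local thermal equilibrium relation r = (ρ+p)(∂_ρ r + χ ∂_p r) holds at (ρ,p). Define ξ(ρ,p) = (χ(ρ,p) − 1)/(r(ρ,p)² χ(ρ,p)). Then ∂_p ξ + (1/χ) ∂_ρ ξ = [(ρ+p)(χ ∂_p χ + ∂_ρ χ) + 2χ(1 − χ)] / (r² (ρ+p) χ³) at (ρ,p). -/

import Mathlib

theorem stmt_5 (r χ : ℝ × ℝ → ℝ) (ρ p : ℝ) (Dr Dχ : ℝ × ℝ →L[ℝ] ℝ)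
    (hr : HasFDerivAt r Dr (ρ, p)) (hχd : HasFDerivAt χ Dχ (ρ, p))
    (hrpos : 0 < r (ρ, p)) (hχ0 : χ (ρ, p) ≠ 0) (hsum : 0 < ρ + p)
    (hlte : r (ρ, p) = (ρ + p) * (Dr (1, 0) + χ (ρ, p) * Dr (0, 1))) :
    fderiv ℝ (fun q : ℝ × ℝ => (χ q - 1) / ((r q) ^ 2 * χ q)) (ρ, p) (0, 1) +
        (1 / χ (ρ, p)) *
          fderiv ℝ (fun q : ℝ × ℝ => (χ q - 1) / ((r q) ^ 2 * χ q)) (ρ, p) (1, 0) =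
      ((ρ + p) * (χ (ρ, p) * Dχ (0, 1) + Dχ (1, 0)) + 2 * χ (ρ, p) * (1 - χ (ρ, p))) /
        ((r (ρ, p)) ^ 2 * (ρ + p) * (χ (ρ, p)) ^ 3) := by
  set R := r (ρ, p) with hR
  set X := χ (ρ, p) with hX
  have hg : HasFDerivAt (fun q : ℝ × ℝ => r q * r q * χ q)
      ((R * R) • Dχ + X • (R • Dr + R • Dr)) (ρ, p) := (hr.mul hr).mul hχd
  have hg0 : R * R * X ≠ 0 := mul_ne_zero (mul_ne_zero hrpos.ne' hrpos.ne') hχ0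
  have hinv := (hasDerivAt_inv hg0).comp_hasFDerivAt (ρ, p) hg
  have hξ : HasFDerivAt (fun q : ℝ × ℝ => (χ q - 1) / ((r q) ^ 2 * χ q))
      ((X - 1) • (-((R * R * X) ^ 2)⁻¹ • ((R * R) • Dχ + X • (R • Dr + R • Dr)))
        + (R * R * X)⁻¹ • Dχ) (ρ, p) := by
    have h2 := (hχd.sub_const 1).mul hinv
    convert h2 using 1
    iterate 5 rfl
    funext q; simp [Function.comp, sq, div_eq_mul_inv]
    rfl
  rw [hξ.fderiv]
  simp only [ContinuousLinearMap.add_apply, ContinuousLinearMap.smul_apply, smul_eq_mul,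
    ContinuousLinearMap.neg_apply]
  have hRne : R ≠ 0 := hrpos.ne'
  have hsne : ρ + p ≠ 0 := hsum.ne'
  have ha : Dr (1, 0) = R / (ρ + p) - X * Dr (0, 1) := by
    field_simp
    linarith [hlte]
  rw [ha]
  field_simp
  ring
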